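/- arXiv:2311.03760 — 2 statements merged into one kernel-verified Lean document; each statement's English description precedes it below -/
import Mathlib

section
/- Let k be a kernel with k(x,x) = 1 for all x, and let σ² > 0 be the noise variance. For a Gaussian process posterior after n observations, the posterior variance at every point x is bounded below: σ_n²(x) ≥ σ²/(σ² + n). -/
open Matrix

theorem posterior_variance_lower_bound (n : ℕ) (s : ℝ) (hs : 0 < s)
    (K : Matrix (Fin n) (Fin n) ℝ) (v : Fin n → ℝ)
    (hdiag : ∀ i, K i i ≤ 1)
    (hPSD : (Matrix.fromBlocks (Matrix.of fun (_ : Unit) (_ : Unit) => (1 : ℝ))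
        (Matrix.of fun (_ : Unit) j => v j) (Matrix.of fun i (_ : Unit) => v i) K).PosSemidef) :
    s / (s + n) ≤ 1 - v ⬝ᵥ ((K + s • (1 : Matrix (Fin n) (Fin n) ℝ))⁻¹ *ᵥ v) := by
  set M := (Matrix.fromBlocks (Matrix.of fun (_ : Unit) (_ : Unit) => (1 : ℝ))
        (Matrix.of fun (_ : Unit) j => v j) (Matrix.of fun i (_ : Unit) => v i) K) with hM
  set A := K + s • (1 : Matrix (Fin n) (Fin n) ℝ) with hAdef
  have hK : K.PosSemidef := by
    have h := hPSD.submatrix Sum.inr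
    have : M.submatrix (Sum.inr : Fin n → Unit ⊕ Fin n) Sum.inr = K := by
      ext i j; simp [hM]
    rwa [this] at h
  have hsI : (s • (1 : Matrix (Fin n) (Fin n) ℝ)).PosDef := by
    refine Matrix.PosDef.of_dotProduct_mulVec_pos (by simp [Matrix.IsHermitian]) fun x hx => ?_
    simp only [smul_mulVec, one_mulVec, dotProduct_smul, star_trivial]
    exact mul_pos hs (by simpa using dotProduct_star_self_pos_iff.mpr hx)
  have hA : A.PosDef := Matrix.PosDef.posSemidef_add hK hsI
  have hinv : A * A⁻¹ = 1 := Matrix.mul_nonsing_inv A (isUnit_iff_isUnit_det A |>.mp hA.isUnit)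
  set u := A⁻¹ *ᵥ v with hu
  have hAu : A *ᵥ u = v := by rw [hu, Matrix.mulVec_mulVec, hinv, Matrix.one_mulVec]
  set c := v ⬝ᵥ u with hc
  -- key: c*(1-c) ≥ s * (u ⬝ᵥ u)
  have hq : u ⬝ᵥ (K *ᵥ u) = c - s * (u ⬝ᵥ u) := by
    have h1 : u ⬝ᵥ (A *ᵥ u) = c := by rw [hAu, hc, dotProduct_comm]
    rw [hAdef, Matrix.add_mulVec, dotProduct_add, smul_mulVec, one_mulVec,
      dotProduct_smul, smul_eq_mul] at h1
    linarith [h1]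
  have key : 0 ≤ c * (1 - c) - s * (u ⬝ᵥ u) := by
    have h := hPSD.dotProduct_mulVec_nonneg (Sum.elim (fun _ : Unit => c) (fun i => -u i))
    simp only [hM, star_trivial, dotProduct, Matrix.mulVec, Fintype.sum_sum_type,
      Finset.univ_unique, Finset.sum_singleton, fromBlocks_apply₁₁, fromBlocks_apply₁₂,
      fromBlocks_apply₂₁, fromBlocks_apply₂₂, Sum.elim_inl, Sum.elim_inr, Matrix.of_apply,
      one_mul, mul_neg, neg_mul, mul_add, neg_add, Finset.sum_neg_distrib,
      Finset.sum_add_distrib] at h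
    have e1 : ∑ x, u x * (v x * c) = (v ⬝ᵥ u) * c := by
      rw [dotProduct, Finset.sum_mul]; exact Finset.sum_congr rfl (fun i _ => by ring)
    have e3 : ∑ x : Fin n, u x * ∑ y : Fin n, K x y * u y = u ⬝ᵥ (K *ᵥ u) := rfl
    have e2 : ∑ x : Fin n, v x * u x = c := rfl
    rw [e1, e3, ← hc, hq, e2] at h
    linarith
  have ht2 : 0 ≤ u ⬝ᵥ u := Finset.sum_nonneg fun i _ => mul_self_nonneg _
  have hv1 : ∀ i, v i ^ 2 ≤ 1 := by
    intro i
    have h := hPSD.dotProduct_mulVec_nonneg (Sum.elim (fun _ : Unit => 1) (fun j => if j = i then -v i else 0))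
    simp only [hM, star_trivial, dotProduct, Matrix.mulVec, Fintype.sum_sum_type,
      Finset.univ_unique, Finset.sum_singleton, fromBlocks_apply₁₁, fromBlocks_apply₁₂,
      fromBlocks_apply₂₁, fromBlocks_apply₂₂, Sum.elim_inl, Sum.elim_inr, Matrix.of_apply,
      one_mul, mul_ite, mul_zero, mul_neg, mul_one, Finset.sum_ite_eq, Finset.sum_ite_eq',
      Finset.mem_univ, if_true, ite_mul, zero_mul] at h
    nlinarith [hdiag i, h, mul_nonneg (sub_nonneg.2 (hdiag i)) (sq_nonneg (v i)), sq_nonneg (v i)]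
  have hcs : c ^ 2 ≤ n * (u ⬝ᵥ u) := by
    have h := Finset.sum_mul_sq_le_sq_mul_sq Finset.univ v u
    have h2 : ∑ i, v i ^ 2 ≤ (n : ℝ) := by
      calc ∑ i, v i ^ 2 ≤ ∑ _i : Fin n, (1 : ℝ) := Finset.sum_le_sum (fun i _ => hv1 i)
        _ = n := by simp
    have e4 : (∑ i, v i * u i) = c := rfl
    have e5 : ∑ i, u i ^ 2 = u ⬝ᵥ u := by
      simp [dotProduct, sq]
    have h6 : 0 ≤ ∑ i, u i ^ 2 := Finset.sum_nonneg fun i _ => sq_nonneg _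
    rw [e4, e5] at h
    rw [e5] at h6
    calc c ^ 2 ≤ (∑ i, v i ^ 2) * (u ⬝ᵥ u) := h
      _ ≤ n * (u ⬝ᵥ u) := mul_le_mul_of_nonneg_right h2 (e5 ▸ h6)
  have hsn : (0:ℝ) < s + n := by positivity
  rw [div_le_iff₀ hsn]
  nlinarith [key, hcs, ht2, sq_nonneg ((s + (n:ℝ)) * c - n), mul_pos hs hsn,
    mul_le_mul_of_nonneg_left hcs (mul_pos hs hsn).le,
    mul_le_mul_of_nonneg_left key hsn.le, Nat.cast_nonneg (α := ℝ) n]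
end

section
/- Let μ, σ : X → ℝ with σ(x) > 0 for all x in a finite set X, and let g* ∈ ℝ. Define x_UCB ∈ argmax_{x ∈ X} {μ(x) + ξ·σ(x)} where ξ = min_{x ∈ X} (g* - μ(x))/σ(x), and x_PIMS ∈ argmin_{x ∈ X} (g* - μ(x))/σ(x). Then max_{x ∈ X} {μ(x) + ξ·σ(x)} = g*, and the two argmax/argmin sets coincide: x is a minimizer of (g* - μ(x))/σ(x) if and only if x is a maximizer of μ(x) + ξ·σ(x). -/
theorem pims_ucb_equivalence {X : Type*} [Fintype X] [Nonempty X]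
    (μ σ : X → ℝ) (hσ : ∀ x, 0 < σ x) (g : ℝ) :
    (⨆ x, (μ x + (⨅ y, (g - μ y) / σ y) * σ x)) = g ∧
    (∀ x : X, (g - μ x) / σ x = (⨅ y, (g - μ y) / σ y) ↔
      μ x + (⨅ y, (g - μ y) / σ y) * σ x = ⨆ y, (μ y + (⨅ z, (g - μ z) / σ z) * σ y)) := by
  set ξ : ℝ := ⨅ y, (g - μ y) / σ y with hξ
  obtain ⟨x0, hx0⟩ := exists_eq_ciInf_of_finite (f := fun y => (g - μ y) / σ y)
  have hle : ∀ x, μ x + ξ * σ x ≤ g := by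
    intro x
    have h1 : ξ ≤ (g - μ x) / σ x := ciInf_le (Finite.bddBelow_range _) x
    have h2 := mul_le_mul_of_nonneg_right h1 (le_of_lt (hσ x))
    rw [div_mul_cancel₀ _ (hσ x).ne'] at h2
    linarith
  have key : ∀ x, (g - μ x) / σ x = ξ ↔ μ x + ξ * σ x = g := by
    intro x
    rw [div_eq_iff (hσ x).ne']
    constructor <;> intro h <;> linarith
  have heq : μ x0 + ξ * σ x0 = g := (key x0).mp hx0
  have hsup : (⨆ x, (μ x + ξ * σ x)) = g := by
    apply le_antisymm (ciSup_le hle)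
    calc g = μ x0 + ξ * σ x0 := heq.symm
      _ ≤ _ := le_ciSup (Finite.bddAbove_range (fun x => μ x + ξ * σ x)) x0
  refine ⟨hsup, fun x => ?_⟩
  rw [hsup]
  exact key x
end
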